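/- Let u ∈ ℝⁿ with r := ‖u‖ > 0, let b ∈ ℝⁿ with ‖b‖ ≤ f₀, let F₁ ∈ ℝ^{n×n} satisfy ⟨x, F₁x⟩ ≤ λ‖x‖² for all x ∈ ℝⁿ, and let F₂ ∈ ℝ^{n×n²}. Assume f₀ + λr + ‖F₂‖r² < 0, set F = b + F₁u + F₂(u⊗u), and let h > 0 satisfy h‖F‖² ≤ −(f₀ + λr + ‖F₂‖r²)·r. Then ‖u + hF‖ ≤ ‖u‖. -/

import Mathlib

/-- The spectral (l₂ operator) norm of a real matrix. -/
noncomputable def specNorm {ι κ : Type*} [Fintype ι] [Fintype κ] [DecidableEq κ]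
    (M : Matrix ι κ ℝ) : ℝ :=
  ‖LinearMap.toContinuousLinearMap (Matrix.toEuclideanLin M)‖

/-- Application of a matrix to a Euclidean vector. -/
noncomputable def mApp {ι κ : Type*} [Fintype ι] [Fintype κ] [DecidableEq κ]
    (M : Matrix ι κ ℝ) (v : EuclideanSpace ℝ κ) : EuclideanSpace ℝ ι :=
  Matrix.toEuclideanLin M v

/-- The Kronecker product of two Euclidean vectors: `(x ⊗ y)_{(i,k)} = x_i y_k`. -/
noncomputable def kron {ι κ : Type*} [Fintype ι] [Fintype κ]
    (x : EuclideanSpace ℝ ι) (y : EuclideanSpace ℝ κ) : EuclideanSpace ℝ (ι × κ) :=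
  (WithLp.equiv 2 _).symm fun p => x p.1 * y p.2


lemma mApp_le {ι κ : Type*} [Fintype ι] [Fintype κ] [DecidableEq κ]
    (M : Matrix ι κ ℝ) (v : EuclideanSpace ℝ κ) : ‖mApp M v‖ ≤ specNorm M * ‖v‖ :=
  (LinearMap.toContinuousLinearMap (Matrix.toEuclideanLin M)).le_opNorm v

lemma norm_kron {ι κ : Type*} [Fintype ι] [Fintype κ]
    (x : EuclideanSpace ℝ ι) (y : EuclideanSpace ℝ κ) : ‖kron x y‖ = ‖x‖ * ‖y‖ := by
  rw [EuclideanSpace.norm_eq, EuclideanSpace.norm_eq, EuclideanSpace.norm_eq,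
    ← Real.sqrt_mul (by positivity)]
  congr 1
  rw [Fintype.sum_prod_type, Finset.sum_mul_sum]
  apply Finset.sum_congr rfl
  intro i _
  apply Finset.sum_congr rfl
  intro k _
  simp [kron, Real.norm_eq_abs, mul_pow, sq_abs]

/-- Per-step stability estimate for the forward Euler scheme applied to the
quadratic ODE `u' = F₀(t) + F₁u + F₂(u⊗u)`: if `‖b‖ ≤ f₀`, `⟨x, F₁x⟩ ≤ λ‖x‖²`,
`f₀ + λr + ‖F₂‖r² < 0` with `r = ‖u‖ > 0`, and the step  size `h > 0` satisfies
`h‖F‖² ≤ −(f₀ + λr + ‖F₂‖r²)·r` for `F = b + F₁u + F₂(u⊗u)`,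
then `‖u + hF‖ ≤ ‖u‖`. -/
theorem euler_step_norm_nonincreasing (n : ℕ) (u b : EuclideanSpace ℝ (Fin n))
    (f₀ lam : ℝ) (F1 : Matrix (Fin n) (Fin n) ℝ) (F2 : Matrix (Fin n) (Fin n × Fin n) ℝ)
    (hr : 0 < ‖u‖) (hb : ‖b‖ ≤ f₀)
    (hquad : ∀ x : EuclideanSpace ℝ (Fin n), (inner ℝ x (mApp F1 x) : ℝ) ≤ lam * ‖x‖ ^ 2)
    (hneg : f₀ + lam * ‖u‖ + specNorm F2 * ‖u‖ ^ 2 < 0)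
    (h : ℝ) (hh : 0 < h)
    (hstep : h * ‖b + mApp F1 u + mApp F2 (kron u u)‖ ^ 2 ≤
      -(f₀ + lam * ‖u‖ + specNorm F2 * ‖u‖ ^ 2) * ‖u‖) :
    ‖u + h • (b + mApp F1 u + mApp F2 (kron u u))‖ ≤ ‖u‖ := by
  set F := b + mApp F1 u + mApp F2 (kron u u) with hF
  have hI : (inner ℝ u F : ℝ) ≤ (f₀ + lam * ‖u‖ + specNorm F2 * ‖u‖ ^ 2) * ‖u‖ := by
    have h1 : (inner ℝ u b : ℝ) ≤ f₀ * ‖u‖ := by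
      calc (inner ℝ u b : ℝ) ≤ ‖u‖ * ‖b‖ := real_inner_le_norm u b
        _ ≤ f₀ * ‖u‖ := by nlinarith [norm_nonneg b]
    have h2 := hquad u
    have h3 : (inner ℝ u (mApp F2 (kron u u)) : ℝ) ≤ specNorm F2 * ‖u‖ ^ 2 * ‖u‖ := by
      calc (inner ℝ u (mApp F2 (kron u u)) : ℝ) ≤ ‖u‖ * ‖mApp F2 (kron u u)‖ :=
              real_inner_le_norm _ _
        _ ≤ ‖u‖ * (specNorm F2 * ‖kron u u‖) := by
              have := mApp_le F2 (kron u u)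
              nlinarith [norm_nonneg u]
        _ = specNorm F2 * ‖u‖ ^ 2 * ‖u‖ := by rw [norm_kron]; ring
    have : (inner ℝ u F : ℝ) = inner ℝ u b + inner ℝ u (mApp F1 u) + inner ℝ u (mApp F2 (kron u u)) := by
      rw [hF, inner_add_right, inner_add_right]
    rw [this]; nlinarith
  have hsq : ‖u + h • F‖ ^ 2 ≤ ‖u‖ ^ 2 := by
    have hexp : ‖u + h • F‖ ^ 2 = ‖u‖ ^ 2 + 2 * (h * inner ℝ u F) + h ^ 2 * ‖F‖ ^ 2 := by
      rw [norm_add_sq_real, real_inner_smul_right, norm_smul, Real.norm_eq_abs,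
        mul_pow, sq_abs]
    rw [hexp]
    nlinarith [hstep, hI, hneg, hr, hh]
  calc ‖u + h • F‖ = Real.sqrt (‖u + h • F‖ ^ 2) := by rw [Real.sqrt_sq (norm_nonneg _)]
    _ ≤ Real.sqrt (‖u‖ ^ 2) := Real.sqrt_le_sqrt hsq
    _ = ‖u‖ := Real.sqrt_sq (norm_nonneg _)
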